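/- Let v_1, …, v_N ∈ ℝ^m and let C = { Σ_{i=1}^N λ_i v_i : λ_i ≥ 0 } be their conic hull. Then C is pointed, i.e., C ∩ (−C) = {0}, if and only if there exist m linearly independent vectors w_1, …, w_m ∈ ℝ^m such that C ⊆ { Σ_{i=1}^m μ_i w_i : μ_i ≥ 0 }, i.e., C is contained in a simplicial cone. -/

import Mathlib

/-- The conic hull of finitely many vectors `v_1, …, v_N` in `ℝ^m`. -/
def conicHullOf {m N : ℕ} (v : Fin N → (Fin m → ℝ)) : Set (Fin m → ℝ) :=
  {x | ∃ lam : Fin N → ℝ, (∀ i, 0 ≤ lam i) ∧ x = ∑ i, lam i • v i}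

namespace ConicAux

variable {m N N' : ℕ}

lemma zero_mem (v : Fin N → (Fin m → ℝ)) : 0 ∈ conicHullOf v :=
  ⟨0, fun _ => le_refl 0, by simp⟩

lemma self_mem (v : Fin N → (Fin m → ℝ)) (i : Fin N) : v i ∈ conicHullOf v := by
  refine ⟨fun j => if j = i then 1 else 0, fun j => by positivity, ?_⟩
  simp [ite_smul]

lemma smul_mem {v : Fin N → (Fin m → ℝ)} {c : ℝ} (hc : 0 ≤ c) {x : Fin m → ℝ}
    (hx : x ∈ conicHullOf v) : c • x ∈ conicHullOf v := by
  obtain ⟨lam, h0, rfl⟩ := hx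
  exact ⟨fun i => c * lam i, fun i => mul_nonneg hc (h0 i),
    by rw [Finset.smul_sum]; simp [smul_smul]⟩

lemma add_mem {v : Fin N → (Fin m → ℝ)} {x y : Fin m → ℝ}
    (hx : x ∈ conicHullOf v) (hy : y ∈ conicHullOf v) : x + y ∈ conicHullOf v := by
  obtain ⟨lam, h0, rfl⟩ := hx
  obtain ⟨lam', h0', rfl⟩ := hy
  exact ⟨fun i => lam i + lam' i, fun i => add_nonneg (h0 i) (h0' i),
    by rw [← Finset.sum_add_distrib]; simp [add_smul]⟩

lemma sum_mem {v : Fin N → (Fin m → ℝ)} {α : Type*} (t : Finset α) (h : α → Fin m → ℝ)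
    (hh : ∀ y ∈ t, h y ∈ conicHullOf v) : ∑ y ∈ t, h y ∈ conicHullOf v := by
  classical
  induction t using Finset.induction_on with
  | empty => simpa using zero_mem v
  | insert _ _ hnot ih =>
    rw [Finset.sum_insert hnot]
    exact add_mem (hh _ (Finset.mem_insert_self _ _))
      (ih fun y hy => hh y (Finset.mem_insert_of_mem hy))

lemma subset_of_gen_mem {v : Fin N → (Fin m → ℝ)} {w : Fin N' → (Fin m → ℝ)}
    (h : ∀ i, v i ∈ conicHullOf w) : conicHullOf v ⊆ conicHullOf w := by
  rintro x ⟨lam, h0, rfl⟩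
  exact sum_mem Finset.univ _ (fun i _ => smul_mem (h0 i) (h i))

/-- A pointed conic hull admits a linear functional positive on all nonzero generators. -/
lemma exists_functional {m N : ℕ} (v : Fin N → (Fin m → ℝ))
    (hp : ∀ x ∈ conicHullOf v, -x ∈ conicHullOf v → x = 0) :
    ∃ F : (Fin m → ℝ) →ₗ[ℝ] ℝ, ∀ i, v i ≠ 0 → 0 < F (v i) := by
  classical
  set s : Finset (Fin m → ℝ) := (Finset.univ.filter fun i => v i ≠ 0).image v with hs
  have hmem_s : ∀ y ∈ s, y ∈ conicHullOf v ∧ y ≠ 0 := by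
    intro y hy
    rw [hs, Finset.mem_image] at hy
    obtain ⟨i, hi, rfl⟩ := hy
    exact ⟨self_mem v i, (Finset.mem_filter.mp hi).2⟩
  have h0 : (0 : Fin m → ℝ) ∉ convexHull ℝ (s : Set (Fin m → ℝ)) := by
    intro hmem
    rw [Finset.convexHull_eq] at hmem
    obtain ⟨wt, hwt0, hwt1, hcm⟩ := hmem
    rw [Finset.centerMass_eq_of_sum_1 _ _ hwt1] at hcm
    simp only [id] at hcm
    have hex : ∃ y ∈ s, (0:ℝ) < wt y := by
      by_contra hc
      push_neg at hc
      have : ∑ y ∈ s, wt y ≤ 0 := Finset.sum_nonpos hc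
      linarith
    obtain ⟨y0, hy0s, hy0pos⟩ := hex
    have hx0 : wt y0 • y0 ∈ conicHullOf v := smul_mem (le_of_lt hy0pos) (hmem_s y0 hy0s).1
    have hnx0 : -(wt y0 • y0) ∈ conicHullOf v := by
      have hsplit : wt y0 • y0 + ∑ y ∈ s.erase y0, wt y • y = 0 := by
        rw [Finset.add_sum_erase s (fun y => wt y • y) hy0s]; exact hcm
      rw [neg_eq_of_add_eq_zero_right hsplit]
      exact sum_mem _ _ fun y hy => smul_mem (hwt0 y (Finset.mem_of_mem_erase hy))
        (hmem_s y (Finset.mem_of_mem_erase hy)).1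
    have := hp _ hx0 hnx0
    rcases smul_eq_zero.mp this with h | h
    · exact absurd h (ne_of_gt hy0pos)
    · exact (hmem_s y0 hy0s).2 h
  obtain ⟨f', u', hfu, hu0⟩ := geometric_hahn_banach_closed_point
    (convex_convexHull ℝ (s : Set (Fin m → ℝ))) (s.finite_toSet.isClosed_convexHull ℝ) h0
  rw [map_zero] at hu0
  refine ⟨-f'.toLinearMap, fun i hi => ?_⟩
  have hvs : v i ∈ convexHull ℝ (s : Set (Fin m → ℝ)) := by
    apply subset_convexHull
    rw [hs]
    exact Finset.mem_coe.mpr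
      (Finset.mem_image.mpr ⟨i, Finset.mem_filter.mpr ⟨Finset.mem_univ i, hi⟩, rfl⟩)
  have := hfu _ hvs
  simp only [LinearMap.neg_apply, ContinuousLinearMap.coe_coe]
  linarith

/-- Key geometric step: given a functional positive on the nonzero generators, the conic hull
is contained in a simplicial cone. -/
lemma step2 {n N : ℕ} (v : Fin N → (Fin (n+1) → ℝ)) (F : (Fin (n+1) → ℝ) →ₗ[ℝ] ℝ)
    (hF : ∀ i, v i ≠ 0 → 0 < F (v i)) (i0 : Fin N) (hi0 : v i0 ≠ 0) :
    ∃ w : Fin (n+1) → (Fin (n+1) → ℝ), LinearIndependent ℝ w ∧ ∀ i, v i ∈ conicHullOf w := by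
  classical
  have hFi0 : 0 < F (v i0) := hF i0 hi0
  set u : Fin (n+1) → ℝ := (F (v i0))⁻¹ • v i0 with hu_def
  have hu : F u = 1 := by
    rw [hu_def, map_smul, smul_eq_mul, inv_mul_cancel₀ (ne_of_gt hFi0)]
  have hsurj : Function.Surjective F := fun r =>
    ⟨r • u, by rw [map_smul, hu, smul_eq_mul, mul_one]⟩
  have hker : Module.finrank ℝ (LinearMap.ker F) = n := by
    have h1 := LinearMap.finrank_range_add_finrank_ker F
    rw [LinearMap.range_eq_top.mpr hsurj, finrank_top, Module.finrank_self,
      Module.finrank_fin_fun] at h1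
    omega
  set K := LinearMap.ker F with hK
  let c : Module.Basis (Fin n) ℝ K := Module.finBasisOfFinrankEq ℝ K hker
  set g : Fin n → (Fin (n+1) → ℝ) := fun j => (c j : Fin (n+1) → ℝ) with hg_def
  have hgK : ∀ j, F (g j) = 0 := fun j => (c j).2
  have hgli : LinearIndependent ℝ g :=
    c.linearIndependent.map' K.subtype (Submodule.ker_subtype K)
  have hmemK : ∀ x : Fin (n+1) → ℝ, x - F x • u ∈ K := fun x => by
    simp [hK, LinearMap.mem_ker, map_sub, map_smul, hu, smul_eq_mul]
  set a : Fin N → Fin n → ℝ := fun i j => c.repr ⟨v i - F (v i) • u, hmemK (v i)⟩ j with ha_def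
  have hdecomp : ∀ i, v i = F (v i) • u + ∑ j, a i j • g j := by
    intro i
    have h := c.sum_repr ⟨v i - F (v i) • u, hmemK (v i)⟩
    have h2 : ∑ j, a i j • g j = v i - F (v i) • u := by
      have h3 := congrArg (K.subtype) h
      rw [map_sum] at h3
      simpa [ha_def, hg_def] using h3
    rw [h2]; abel
  have ha0 : ∀ i, v i = 0 → a i = 0 := by
    intro i hvi
    have hz : (⟨v i - F (v i) • u, hmemK (v i)⟩ : K) = 0 := by
      apply Subtype.ext; simp [hvi]
    funext j; simp [ha_def, hz]
  set M : ℝ := 1 + ∑ i, ∑ j, |a i j| / F (v i) with hM_def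
  have haM_nonneg : ∀ (i : Fin N) (j : Fin n), 0 ≤ |a i j| / F (v i) := by
    intro i j
    by_cases h : v i = 0
    · simp [ha0 i h]
    · exact div_nonneg (abs_nonneg _) (le_of_lt (hF i h))
  have hM1 : 1 ≤ M := by
    have h := Finset.sum_nonneg fun i (_ : i ∈ Finset.univ) =>
      Finset.sum_nonneg fun j (_ : j ∈ Finset.univ) => haM_nonneg i j
    rw [hM_def]; linarith
  have hMpos : 0 < M := by linarith
  have haM : ∀ (i : Fin N) (j : Fin n), |a i j| ≤ M * F (v i) := by
    intro i j
    by_cases h : v i = 0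
    · simp [ha0 i h, h]
    · have hFi : 0 < F (v i) := hF i h
      have h1 : |a i j| / F (v i) ≤ ∑ j', |a i j'| / F (v i) :=
        Finset.single_le_sum (fun j' _ => haM_nonneg i j') (Finset.mem_univ j)
      have h2 : (∑ j', |a i j'| / F (v i)) ≤ ∑ i', ∑ j', |a i' j'| / F (v i') :=
        Finset.single_le_sum (f := fun i' => ∑ j', |a i' j'| / F (v i'))
          (fun i' _ => Finset.sum_nonneg fun j' _ => haM_nonneg i' j') (Finset.mem_univ i)
      have h3 : |a i j| / F (v i) ≤ M := by rw [hM_def]; linarith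
      calc |a i j| = (|a i j| / F (v i)) * F (v i) := by field_simp
        _ ≤ M * F (v i) := mul_le_mul_of_nonneg_right h3 hFi.le
  set D : ℝ := 2 * n * M with hD_def
  set w0 : Fin (n+1) → ℝ := u - M • ∑ j, g j with hw0_def
  set w : Fin (n+1) → (Fin (n+1) → ℝ) := Fin.cons w0 (fun j => w0 + D • g j) with hw_def
  have hFg : F (∑ j, g j) = 0 := by rw [map_sum]; simp [hgK]
  have hFw0 : F w0 = 1 := by
    rw [hw0_def, map_sub, hu, map_smul, hFg, smul_eq_mul, mul_zero, sub_zero]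
  have hFw : ∀ k, F (w k) = 1 := by
    intro k
    induction k using Fin.cases with
    | zero => simpa [hw_def] using hFw0
    | succ j => simp [hw_def, map_add, map_smul, hgK j, hFw0]
  have hsum_w : ∀ α : Fin (n+1) → ℝ,
      ∑ k, α k • w k = (∑ k, α k) • w0 + ∑ j, (α j.succ * D) • g j := by
    intro α
    rw [Fin.sum_univ_succ (f := fun k => α k • w k), Fin.sum_univ_succ (f := fun k => α k)]
    simp only [hw_def, Fin.cons_zero, Fin.cons_succ]
    rw [Finset.sum_congr rfl (fun j _ => by
      rw [smul_add, smul_smul] : ∀ j ∈ Finset.univ,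
        α j.succ • (w0 + D • g j) = α j.succ • w0 + (α j.succ * D) • g j)]
    rw [Finset.sum_add_distrib, ← Finset.sum_smul, add_smul]
    abel
  have hDpos : 0 < n → 0 < D := by
    intro hn
    have : (0:ℝ) < n := by exact_mod_cast hn
    rw [hD_def]; positivity
  have hwli : LinearIndependent ℝ w := by
    rw [Fintype.linearIndependent_iff]
    intro α hα
    have hsum0 : ∑ k, α k = 0 := by
      have h := congrArg F hα
      rw [map_sum, map_zero] at h
      simp only [map_smul, smul_eq_mul, hFw, mul_one] at h
      exact h
    rw [hsum_w α, hsum0, zero_smul, zero_add] at hα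
    have hz := Fintype.linearIndependent_iff.mp hgli _ hα
    have hsucc : ∀ j : Fin n, α j.succ = 0 := by
      intro j
      have hD : D ≠ 0 := (hDpos j.pos).ne'
      exact (mul_eq_zero.mp (hz j)).resolve_right hD
    intro k
    induction k using Fin.cases with
    | zero =>
      rw [Fin.sum_univ_succ] at hsum0
      simpa [hsucc] using hsum0
    | succ j => exact hsucc j
  refine ⟨w, hwli, fun i => ?_⟩
  by_cases hvi : v i = 0
  · rw [hvi]; exact zero_mem w
  · set t : ℝ := F (v i) with ht_def
    have ht0 : 0 < t := hF i hvi
    set β : Fin (n+1) → ℝ :=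
      Fin.cons (t - ∑ j, (a i j + M * t) / D) (fun j => (a i j + M * t) / D) with hβ_def
    have hβsucc : ∀ j : Fin n, 0 ≤ (a i j + M * t) / D := by
      intro j
      have hD : 0 < D := hDpos j.pos
      apply div_nonneg _ hD.le
      have := (abs_le.mp (haM i j)).1
      linarith
    have hsumβ_le : ∑ j, (a i j + M * t) / D ≤ t := by
      rcases Nat.eq_zero_or_pos n with hn | hn
      · subst hn; simp [ht0.le]
      · have hD : 0 < D := hDpos hn
        have hnn : (0:ℝ) < n := by exact_mod_cast hn
        calc ∑ j : Fin n, (a i j + M * t) / D ≤ ∑ _j : Fin n, (2 * M * t) / D := by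
              apply Finset.sum_le_sum
              intro j _
              have hj := (abs_le.mp (haM i j)).2
              exact (div_le_div_iff_of_pos_right hD).mpr (by rw [← ht_def] at hj; linarith)
          _ = n * ((2 * M * t) / D) := by
              rw [Finset.sum_const, Finset.card_univ, Fintype.card_fin, nsmul_eq_mul]
          _ = t := by
              rw [hD_def]; field_simp
    have hβ0 : 0 ≤ β 0 := by
      rw [hβ_def, Fin.cons_zero]; linarith
    refine ⟨β, ?_, ?_⟩
    · intro k
      induction k using Fin.cases with
      | zero => exact hβ0
      | succ j => rw [hβ_def, Fin.cons_succ]; exact hβsucc j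
    · rw [hsum_w β]
      have h1 : ∑ k, β k = t := by
        rw [Fin.sum_univ_succ, hβ_def]
        simp only [Fin.cons_zero, Fin.cons_succ]
        ring
      have h2 : ∑ j, (β j.succ * D) • g j = ∑ j, a i j • g j + (M * t) • ∑ j, g j := by
        rw [Finset.smul_sum, ← Finset.sum_add_distrib]
        apply Finset.sum_congr rfl
        intro j _
        have hD : D ≠ 0 := (hDpos j.pos).ne'
        rw [hβ_def]
        simp only [Fin.cons_succ]
        rw [div_mul_cancel₀ _ hD, add_smul]
      rw [h1, h2, hdecomp i, hw0_def, ← ht_def]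
      module

end ConicAux

/-- the conic hull `C` of `v_1, …, v_N` is pointed (`C ∩ (−C) = {0}`) iff it is
contained in a simplicial cone, i.e. the set of nonnegative combinations of `m` linearly
independent vectors of `ℝ^m`. -/
theorem pointed_iff_subset_simplicial_cone {m N : ℕ} (v : Fin N → (Fin m → ℝ)) :
    (∀ x ∈ conicHullOf v, -x ∈ conicHullOf v → x = 0)
    ↔ ∃ w : Fin m → (Fin m → ℝ), LinearIndependent ℝ w ∧
        conicHullOf v ⊆ {y | ∃ μ : Fin m → ℝ, (∀ i, 0 ≤ μ i) ∧ y = ∑ i, μ i • w i} := by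
  constructor
  · intro hp
    by_cases hall : ∀ i, v i = 0
    · refine ⟨⇑(Pi.basisFun ℝ (Fin m)), (Pi.basisFun ℝ (Fin m)).linearIndependent, ?_⟩
      rintro x ⟨lam, h0, rfl⟩
      exact ⟨0, fun _ => le_refl 0, by simp [hall]⟩
    · push_neg at hall
      obtain ⟨i0, hi0⟩ := hall
      obtain ⟨F, hF⟩ := ConicAux.exists_functional v hp
      have hm : m ≠ 0 := by
        rintro rfl
        exact hi0 (Subsingleton.elim _ _)
      obtain ⟨n, rfl⟩ : ∃ n, m = n + 1 := ⟨m - 1, (Nat.succ_pred_eq_of_pos (Nat.pos_of_ne_zero hm)).symm⟩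
      obtain ⟨w, hwli, hgen⟩ := ConicAux.step2 v F hF i0 hi0
      exact ⟨w, hwli, ConicAux.subset_of_gen_mem hgen⟩
  · rintro ⟨w, hw, hsub⟩ x hx hnx
    obtain ⟨μ, hμ, hxe⟩ := hsub hx
    obtain ⟨ν, hν, hnxe⟩ := hsub hnx
    have hsum : ∑ i, (μ i + ν i) • w i = 0 := by
      simp only [add_smul, Finset.sum_add_distrib, ← hxe, ← hnxe]
      abel
    have hz := Fintype.linearIndependent_iff.mp hw (fun i => μ i + ν i) hsum
    have hμ0 : ∀ i, μ i = 0 := by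
      intro i
      have h := hz i
      linarith [hν i, hμ i]
    rw [hxe]
    simp [hμ0]
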